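/- Let (p_j)_{j≥1} be positive reals summing to 1 and Φ_r(t) = (t^r/r!) ∑_j e^{-t p_j} p_j^r. Then for all γ ∈ [0,1] and t ≥ 0: Φ_r(γt) ≤ γ^r (t^r/r!)^{1-γ} Φ_r(t)^γ. -/

import Mathlib

noncomputable def Phi (p : ℕ → ℝ) (r : ℕ) (t : ℝ) : ℝ :=
  t ^ r / (Nat.factorial r) * ∑' j, Real.exp (-t * p j) * p j ^ r

theorem stmt_2 (p : ℕ → ℝ) (hp : ∀ j, 0 < p j) (hsum : Summable p)
    (h1 : ∑' j, p j = 1) (r : ℕ) (hr : 1 ≤ r)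
    (γ t : ℝ) (hγ0 : 0 ≤ γ) (hγ1 : γ ≤ 1) (ht : 0 ≤ t) :
    Phi p r (γ * t) ≤ γ ^ r * (t ^ r / (Nat.factorial r)) ^ ((1 : ℝ) - γ) * Phi p r t ^ γ := by
  have hrz : r ≠ 0 := by omega
  -- each p j ≤ 1
  have hple : ∀ j, p j ≤ 1 := by
    intro j
    have := hsum.le_tsum j (fun i _ => (hp i).le)
    rwa [h1] at this
  -- p j ^ r ≤ p j
  have hpow_le : ∀ j, p j ^ r ≤ p j := by
    intro j
    calc p j ^ r ≤ p j ^ 1 := pow_le_pow_of_le_one (hp j).le (hple j) hr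
    _ = p j := pow_one _
  -- summability of weights
  have hw_sum : Summable (fun j => p j ^ r) :=
    Summable.of_nonneg_of_le (fun j => pow_nonneg (hp j).le r) hpow_le hsum
  have hw_le_one : (∑' j, p j ^ r) ≤ 1 := by
    rw [← h1]
    exact Summable.tsum_le_tsum hpow_le hw_sum hsum
  have hw_nonneg : 0 ≤ ∑' j, p j ^ r :=
    tsum_nonneg fun j => pow_nonneg (hp j).le r
  -- summability of S u for u ≥ 0
  have hS_sum : ∀ u : ℝ, 0 ≤ u → Summable (fun j => Real.exp (-u * p j) * p j ^ r) := by
    intro u hu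
    refine Summable.of_nonneg_of_le
      (fun j => mul_nonneg (Real.exp_pos _).le (pow_nonneg (hp j).le r)) (fun j => ?_) hw_sum
    have : Real.exp (-u * p j) ≤ 1 := Real.exp_le_one_iff.mpr (by nlinarith [(hp j).le])
    nlinarith [pow_nonneg (hp j).le r]
  have hS_nonneg : ∀ u : ℝ, 0 ≤ ∑' j, Real.exp (-u * p j) * p j ^ r :=
    fun u => tsum_nonneg fun j => mul_nonneg (Real.exp_pos _).le (pow_nonneg (hp j).le r)
  -- trivial cases
  rcases eq_or_lt_of_le ht with ht0 | htpos
  · -- t = 0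
    have : Phi p r (γ * t) = 0 := by
      simp [Phi, ← ht0, zero_pow hrz]
    rw [this]
    have h1' : 0 ≤ (t ^ r / (Nat.factorial r) : ℝ) ^ ((1:ℝ) - γ) := Real.rpow_nonneg (by positivity) _
    have h2' : 0 ≤ Phi p r t ^ γ := Real.rpow_nonneg (by
      have : (0:ℝ) ≤ t ^ r / (Nat.factorial r) := by positivity
      exact mul_nonneg this (hS_nonneg t)) _
    positivity
  rcases eq_or_lt_of_le hγ0 with hγz | hγpos
  · -- γ = 0
    have : Phi p r (γ * t) = 0 := by
      simp [Phi, ← hγz, zero_pow hrz]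
    rw [this, ← hγz]
    have h2' : 0 ≤ Phi p r t ^ (0:ℝ) := Real.rpow_nonneg (by
      have : (0:ℝ) ≤ t ^ r / (Nat.factorial r) := by positivity
      exact mul_nonneg this (hS_nonneg t)) _
    have h1' : 0 ≤ (t ^ r / (Nat.factorial r) : ℝ) ^ ((1:ℝ)-(0:ℝ)) := Real.rpow_nonneg (by positivity) _
    simp [zero_pow hrz]
  -- key inequality : S (γ t) ≤ S t ^ γ
  have key : (∑' j, Real.exp (-(γ * t) * p j) * p j ^ r)
      ≤ (∑' j, Real.exp (-t * p j) * p j ^ r) ^ γ := by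
    rcases eq_or_lt_of_le hγ1 with hγ1' | hγlt
    · rw [hγ1', Real.rpow_one]
      simp
    -- 0 < γ < 1 : Hölder
    have hγne : γ ≠ 0 := ne_of_gt hγpos
    have h1γpos : 0 < 1 - γ := by linarith
    have h1γne : (1:ℝ) - γ ≠ 0 := ne_of_gt h1γpos
    set f : ℕ → ℝ := fun j => (Real.exp (-t * p j) * p j ^ r) ^ γ with hf
    set g : ℕ → ℝ := fun j => (p j ^ r) ^ ((1:ℝ) - γ) with hg
    have hconj : (γ⁻¹).HolderConjugate ((1 - γ)⁻¹) := by
      refine Real.holderConjugate_iff.mpr ⟨?_, ?_⟩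
      · exact (one_lt_inv₀ hγpos).mpr hγlt
      · rw [inv_inv, inv_inv]; ring
    have hfP : ∀ j, f j ^ γ⁻¹ = Real.exp (-t * p j) * p j ^ r := by
      intro j
      exact Real.rpow_rpow_inv (mul_nonneg (Real.exp_pos _).le (pow_nonneg (hp j).le r)) hγne
    have hgQ : ∀ j, g j ^ ((1:ℝ) - γ)⁻¹ = p j ^ r := by
      intro j
      exact Real.rpow_rpow_inv (pow_nonneg (hp j).le r) h1γne
    have hfg : ∀ j, f j * g j = Real.exp (-(γ * t) * p j) * p j ^ r := by
      intro j
      have hw : (0:ℝ) ≤ p j ^ r := pow_nonneg (hp j).le r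
      rw [hf, hg]
      simp only
      rw [Real.mul_rpow (Real.exp_pos _).le hw, ← Real.exp_mul,
        mul_assoc, ← Real.rpow_add' hw (by norm_num : γ + ((1:ℝ) - γ) ≠ 0),
        add_sub_cancel, Real.rpow_one, show -t * p j * γ = -(γ * t) * p j by ring]
    have := Real.inner_le_Lp_mul_Lq_tsum_of_nonneg hconj
      (f := f) (g := g)
      (fun j => Real.rpow_nonneg (mul_nonneg (Real.exp_pos _).le (pow_nonneg (hp j).le r)) _)
      (fun j => Real.rpow_nonneg (pow_nonneg (hp j).le r) _)
      (by simp only [hfP]; exact hS_sum t ht)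
      (by simp only [hgQ]; exact hw_sum)
    simp only [hfP, hgQ, hfg] at this
    calc (∑' j, Real.exp (-(γ * t) * p j) * p j ^ r)
        ≤ (∑' j, Real.exp (-t * p j) * p j ^ r) ^ (1/γ⁻¹) *
          (∑' j, p j ^ r) ^ (1/((1:ℝ)-γ)⁻¹) := this
      _ ≤ (∑' j, Real.exp (-t * p j) * p j ^ r) ^ (1/γ⁻¹) * 1 := by
          apply mul_le_mul_of_nonneg_left _ (Real.rpow_nonneg (hS_nonneg t) _)
          calc (∑' j, p j ^ r) ^ (1/((1:ℝ)-γ)⁻¹) ≤ (1:ℝ) ^ (1/((1:ℝ)-γ)⁻¹) :=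
                Real.rpow_le_rpow hw_nonneg hw_le_one (by positivity)
            _ = 1 := Real.one_rpow _
      _ = (∑' j, Real.exp (-t * p j) * p j ^ r) ^ γ := by
          rw [mul_one, one_div, inv_inv]
  -- now combine
  have hfac : (0:ℝ) < (Nat.factorial r : ℝ) := by positivity
  have hbase : (0:ℝ) ≤ t ^ r / (Nat.factorial r) := by positivity
  have hBB : (t ^ r / (Nat.factorial r) : ℝ) ^ ((1:ℝ) - γ) *
      (t ^ r / (Nat.factorial r) : ℝ) ^ γ = t ^ r / (Nat.factorial r) := by
    rw [← Real.rpow_add' hbase (by norm_num : (1:ℝ) - γ + γ ≠ 0), sub_add_cancel, Real.rpow_one]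
  have hRHS : γ ^ r * (t ^ r / (Nat.factorial r)) ^ ((1 : ℝ) - γ) * Phi p r t ^ γ
      = γ ^ r * (t ^ r / (Nat.factorial r)) *
        (∑' j, Real.exp (-t * p j) * p j ^ r) ^ γ := by
    rw [Phi, Real.mul_rpow hbase (hS_nonneg t)]
    calc γ ^ r * (t ^ r / (Nat.factorial r)) ^ ((1:ℝ) - γ) *
          ((t ^ r / (Nat.factorial r)) ^ γ * (∑' j, Real.exp (-t * p j) * p j ^ r) ^ γ)
        = γ ^ r * ((t ^ r / (Nat.factorial r)) ^ ((1:ℝ) - γ) * (t ^ r / (Nat.factorial r)) ^ γ) *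
          (∑' j, Real.exp (-t * p j) * p j ^ r) ^ γ := by ring
      _ = _ := by rw [hBB]
  have hL : Phi p r (γ * t) = γ ^ r * (t ^ r / (Nat.factorial r)) *
      ∑' j, Real.exp (-(γ * t) * p j) * p j ^ r := by
    rw [Phi, mul_pow]; ring
  rw [hL, hRHS]
  exact mul_le_mul_of_nonneg_left key (by positivity)
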